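/- For a non-empty set X, (Fact(X), ≤, ⊥, 0, 1) is an orthomodular poset: ≤ is a partial order on Fact(X) with least element 0 = (∇,Δ) and greatest element 1 = (Δ,∇); the map ⊥ is order-reversing and an involution; for every x in Fact(X), the only lower bound of x and x^⊥ is 0 and the only upper bound is 1; whenever x ≤ y^⊥, the pair x, y has a least upper bound x⊕y; and whenever x ≤ y^⊥, one has x ⊕ (x⊕y)^⊥ = y^⊥. -/

import Mathlib

/-- A factor pair is a pair of equivalence relations with `θ ∩ θ' = Δ` and `θ ∘ θ' = ∇`. -/
def IsFactorPair {X : Type*} (θ θ' : Setoid X) : Prop :=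
  (∀ x y : X, θ x y ∧ θ' x y ↔ x = y) ∧
  ∀ x y : X, Relation.Comp (⇑θ) (⇑θ') x y

/-- `Fact X`, the set of factor pairs of `X`. -/
def FactPair (X : Type*) : Type _ :=
  {p : Setoid X × Setoid X // IsFactorPair p.1 p.2}

/-- The order on `Fact X`: `(θ,θ') ≤ (φ,φ')` iff `φ ⊆ θ`, `θ' ⊆ φ'` and `φ∘θ' = θ'∘φ`. -/
def FactLE {X : Type*} (p q : FactPair X) : Prop :=
  q.1.1 ≤ p.1.1 ∧ p.1.2 ≤ q.1.2 ∧
    Relation.Comp (⇑q.1.1) (⇑p.1.2) = Relation.Comp (⇑p.1.2) (⇑q.1.1)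

def FactLT {X : Type*} (p q : FactPair X) : Prop :=
  FactLE p q ∧ p ≠ q

/-- The orthocomplementation `(θ,θ')^⊥ = (θ',θ)` on `Fact X`. -/
def FactPerp {X : Type*} (p : FactPair X) : FactPair X :=
  ⟨(p.1.2, p.1.1), by
    obtain ⟨h1, h2⟩ := p.2
    refine ⟨fun x y => ⟨fun h => (h1 x y).1 ⟨h.2, h.1⟩, ?_⟩, fun x y => ?_⟩
    · rintro rfl
      exact ⟨p.1.2.refl' x, p.1.1.refl' x⟩
    · obtain ⟨z, hz1, hz2⟩ := h2 y x
      exact ⟨z, p.1.2.symm' hz2, p.1.1.symm' hz1⟩⟩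

/-- `0 = (∇,Δ)` in `Fact X`. -/
def FactZero (X : Type*) : FactPair X :=
  ⟨(⊤, ⊥), by
    refine ⟨fun x y => ⟨fun h => ?_, ?_⟩, fun x y => ⟨y, ?_, ?_⟩⟩
    · simpa [Setoid.bot_def] using h.2
    · rintro rfl
      exact ⟨(⊤ : Setoid X).refl' x, (⊥ : Setoid X).refl' x⟩
    · simp [Setoid.top_def]
    · simp [Setoid.bot_def]⟩

/-- `1 = (Δ,∇)` in `Fact X`. -/
def FactOne (X : Type*) : FactPair X :=
  ⟨(⊥, ⊤), by
    refine ⟨fun x y => ⟨fun h => ?_, ?_⟩, fun x y => ⟨x, ?_, ?_⟩⟩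
    · simpa [Setoid.bot_def] using h.1
    · rintro rfl
      exact ⟨(⊥ : Setoid X).refl' x, (⊤ : Setoid X).refl' x⟩
    · simp [Setoid.bot_def]
    · simp [Setoid.top_def]⟩

/-- An atom of `Fact X`. -/
def IsFactAtom {X : Type*} (a : FactPair X) : Prop :=
  FactLT (FactZero X) a ∧ ∀ x : FactPair X, FactLT (FactZero X) x → ¬ FactLT x a

/-- An `n`-relation: every equivalence class has exactly `n` elements. -/
def IsNRel {X : Type*} (n : ℕ) (θ : Setoid X) : Prop :=
  ∀ x : X, Nat.card {y // θ x y} = n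

/-- A `p`-atom: an atom `(φ,φ')` such that `φ'` is a `p`-relation. -/
def IsPAtom {X : Type*} (p : ℕ) (a : FactPair X) : Prop :=
  IsFactAtom a ∧ IsNRel p a.1.2

/-- The image `σ(θ) = {(σ x, σ y) : (x,y) ∈ θ}` of an equivalence relation under a
permutation. -/
def permSetoid {X : Type*} (σ : Equiv.Perm X) (θ : Setoid X) : Setoid X :=
  ⟨fun a b => θ (σ.symm a) (σ.symm b),
    ⟨fun a => θ.refl' _, fun h => θ.symm' h, fun h1 h2 => θ.trans' h1 h2⟩⟩

/-- The action `Γ(σ)(θ,θ') = (σ(θ),σ(θ'))` of a permutation on factor pairs. -/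
def permFactPair {X : Type*} (σ : Equiv.Perm X) (t : FactPair X) : FactPair X :=
  ⟨(permSetoid σ t.1.1, permSetoid σ t.1.2), by
    obtain ⟨h1, h2⟩ := t.2
    refine ⟨fun x y => ⟨fun h => ?_, ?_⟩, fun x y => ?_⟩
    · exact σ.symm.injective ((h1 (σ.symm x) (σ.symm y)).1 ⟨h.1, h.2⟩)
    · rintro rfl
      exact ⟨t.1.1.refl' _, t.1.2.refl' _⟩
    · obtain ⟨w, hw1, hw2⟩ := h2 (σ.symm x) (σ.symm y)
      refine ⟨σ w, ?_, ?_⟩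
      · show t.1.1 (σ.symm x) (σ.symm (σ w))
        simpa using hw1
      · show t.1.2 (σ.symm (σ w)) (σ.symm y)
        simpa using hw2⟩

/-- An automorphism of `Fact X`: a bijection preserving `≤` in both directions and
commuting with `⊥`. -/
def IsFactAut {X : Type*} (α : FactPair X → FactPair X) : Prop :=
  Function.Bijective α ∧
  (∀ p q : FactPair X, FactLE p q ↔ FactLE (α p) (α q)) ∧
  ∀ p : FactPair X, α (FactPerp p) = FactPerp (α p)

/-- `Eq*(X)`: the equivalence relations on `X` that are `n`-relations for some `n ≥ 1`. -/
def EqStar (X : Type*) : Type _ :=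
  {θ : Setoid X // ∃ n : ℕ, 0 < n ∧ IsNRel n θ}

/-- A regular equivalence relation: any two classes are equinumerous. -/
def IsRegularRel {X : Type*} (θ : Setoid X) : Prop :=
  ∀ x y : X, Nonempty ({z // θ x z} ≃ {z // θ y z})

/-- The action of a permutation on `Eq*(X)`. -/
def permEqStar {X : Type*} (σ : Equiv.Perm X) (θ : EqStar X) : EqStar X :=
  ⟨permSetoid σ θ.1, by
    obtain ⟨n, hn, hrel⟩ := θ.2
    refine ⟨n, hn, fun x => ?_⟩
    have e : {y // (permSetoid σ θ.1) x y} ≃ {y // θ.1 (σ.symm x) y} :=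
      σ.symm.subtypeEquiv fun y => Iff.rfl
    rw [Nat.card_congr e]
    exact hrel (σ.symm x)⟩


section FactHelpers

variable {X : Type*}

private lemma fp_eq {θ θ' : Setoid X} (h : IsFactorPair θ θ') {x y : X}
    (h1 : θ x y) (h2 : θ' x y) : x = y := (h.1 x y).1 ⟨h1, h2⟩

private lemma fp_total' {θ θ' : Setoid X} (h : IsFactorPair θ θ') (x y : X) :
    ∃ z, θ' x z ∧ θ z y := by
  obtain ⟨z, hz1, hz2⟩ := h.2 y x
  exact ⟨z, θ'.symm' hz2, θ.symm' hz1⟩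

private lemma comm_of_incl {α β : Setoid X}
    (h : ∀ x y z : X, α x z → β z y → ∃ w, β x w ∧ α w y) :
    Relation.Comp (⇑α) (⇑β) = Relation.Comp (⇑β) (⇑α) := by
  funext x y
  apply propext
  constructor
  · rintro ⟨z, h1, h2⟩
    exact h x y z h1 h2
  · rintro ⟨z, h1, h2⟩
    obtain ⟨w, hw1, hw2⟩ := h y x z (α.symm' h2) (β.symm' h1)
    exact ⟨w, α.symm' hw2, β.symm' hw1⟩

private lemma comm_use {α β : Setoid X}
    (h : Relation.Comp (⇑α) (⇑β) = Relation.Comp (⇑β) (⇑α)) {x y z : X}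
    (h1 : α x z) (h2 : β z y) : ∃ w, β x w ∧ α w y := by
  have h3 : Relation.Comp (⇑α) (⇑β) x y := ⟨z, h1, h2⟩
  rw [h] at h3
  exact h3

private lemma factLE_antisymm {p q : FactPair X} (h1 : FactLE p q) (h2 : FactLE q p) :
    p = q :=
  Subtype.ext (Prod.ext (le_antisymm h2.1 h1.1) (le_antisymm h1.2.1 h2.2.1))

private lemma factLE_refl (p : FactPair X) : FactLE p p :=
  ⟨le_refl _, le_refl _, comm_of_incl fun x y _ _ _ => fp_total' p.2 x y⟩

private lemma factLE_trans {p q r : FactPair X} (hpq : FactLE p q) (hqr : FactLE q r) :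
    FactLE p r := by
  refine ⟨le_trans hqr.1 hpq.1, le_trans hpq.2.1 hqr.2.1, comm_of_incl fun x y z hxz hzy => ?_⟩
  -- hxz : r.1.1 x z, hzy : p.1.2 z y
  obtain ⟨n, hn1, hn2⟩ := comm_use hpq.2.2 (hqr.1 hxz) hzy
  -- hn1 : p.1.2 x n, hn2 : q.1.1 n y
  have hn3 : q.1.2 n x := hpq.2.1 (p.1.2.symm' hn1)
  obtain ⟨t, ht1, ht2⟩ := comm_use hqr.2.2.symm hn3 hxz
  -- ht1 : r.1.1 n t, ht2 : q.1.2 t z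
  have hty : t = y := fp_eq q.2
    (q.1.1.trans' (q.1.1.symm' (hqr.1 ht1)) hn2)
    (q.1.2.trans' ht2 (hpq.2.1 hzy))
  exact ⟨n, hn1, hty ▸ ht1⟩

private lemma perp_antitone {p q : FactPair X} (h : FactLE p q) :
    FactLE (FactPerp q) (FactPerp p) :=
  ⟨h.2.1, h.1, h.2.2.symm⟩

private def meetSetoid (θ φ : Setoid X) : Setoid X :=
  ⟨fun a b => θ a b ∧ φ a b,
    ⟨fun a => ⟨θ.refl' a, φ.refl' a⟩,
     fun h => ⟨θ.symm' h.1, φ.symm' h.2⟩,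
     fun h h' => ⟨θ.trans' h.1 h'.1, φ.trans' h.2 h'.2⟩⟩⟩

private lemma meetSetoid_apply {θ φ : Setoid X} {a b : X} :
    meetSetoid θ φ a b ↔ θ a b ∧ φ a b := Iff.rfl

private def joinSetoid (θ' φ' : Setoid X)
    (hc : Relation.Comp (⇑φ') (⇑θ') = Relation.Comp (⇑θ') (⇑φ')) : Setoid X :=
  ⟨fun a b => ∃ c, θ' a c ∧ φ' c b,
    ⟨fun a => ⟨a, θ'.refl' a, φ'.refl' a⟩,
     fun {a b} h => by
      obtain ⟨c, h1, h2⟩ := h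
      obtain ⟨w, hw1, hw2⟩ := comm_use hc (φ'.symm' h2) (θ'.symm' h1)
      exact ⟨w, hw1, hw2⟩,
     fun {a b c} h h' => by
      obtain ⟨u, h1, h2⟩ := h
      obtain ⟨v, h3, h4⟩ := h'
      obtain ⟨w, hw1, hw2⟩ := comm_use hc h2 h3
      exact ⟨w, θ'.trans' h1 hw1, φ'.trans' hw2 h4⟩⟩⟩

private lemma joinSetoid_apply {θ' φ' : Setoid X}
    {hc : Relation.Comp (⇑φ') (⇑θ') = Relation.Comp (⇑θ') (⇑φ')} {a b : X} :
    joinSetoid θ' φ' hc a b ↔ ∃ c, θ' a c ∧ φ' c b := Iff.rfl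

private theorem join_main (p q : FactPair X) (h : FactLE p (FactPerp q)) :
    ∃ s : FactPair X, FactLE p s ∧ FactLE q s ∧
      (∀ r : FactPair X, FactLE p r → FactLE q r → FactLE s r) ∧
      (∀ r : FactPair X, FactLE p r → FactLE (FactPerp s) r → FactLE (FactPerp q) r) := by
  obtain ⟨h1, h2, h3⟩ := h
  -- h1 : q.1.2 ≤ p.1.1 ; h2 : p.1.2 ≤ q.1.1 ; h3 : Comp q.1.2 p.1.2 = Comp p.1.2 q.1.2
  have h1' : q.1.2 ≤ p.1.1 := h1
  have h2' : p.1.2 ≤ q.1.1 := h2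
  have h3' : Relation.Comp (⇑q.1.2) (⇑p.1.2) = Relation.Comp (⇑p.1.2) (⇑q.1.2) := h3
  refine ⟨⟨(meetSetoid p.1.1 q.1.1, joinSetoid p.1.2 q.1.2 h3'), ?_, ?_⟩, ?_, ?_, ?_, ?_⟩
  · -- meet is Δ
    refine fun x y => ⟨fun hxy => ?_, ?_⟩
    · obtain ⟨⟨hθ, hφ⟩, c, hθ', hφ'⟩ := hxy
      have hcy : c = y := fp_eq q.2 (q.1.1.trans' (q.1.1.symm' (h2' hθ')) hφ) hφ'
      subst hcy
      exact fp_eq p.2 hθ hθ'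
    · rintro rfl
      exact ⟨⟨p.1.1.refl' x, q.1.1.refl' x⟩, x, p.1.2.refl' x, q.1.2.refl' x⟩
  · -- total
    intro x y
    obtain ⟨u, hφxu, hφ'uy⟩ := q.2.2 x y
    obtain ⟨m, hθxm, hθ'mu⟩ := p.2.2 x u
    have hφxm : q.1.1 x m := q.1.1.trans' hφxu (q.1.1.symm' (h2' hθ'mu))
    exact ⟨m, ⟨hθxm, hφxm⟩, u, hθ'mu, hφ'uy⟩
  · -- p ≤ s
    refine ⟨fun x y hxy => hxy.1, fun x y hxy => ⟨y, hxy, q.1.2.refl' y⟩,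
      comm_of_incl fun x y z hxz hzy => ?_⟩
    -- hxz : meet x z, hzy : p.1.2 z y
    obtain ⟨w, hw1, hw2⟩ := fp_total' p.2 x y
    have hφwy : q.1.1 w y :=
      q.1.1.trans' (q.1.1.symm' (h2' hw1)) (q.1.1.trans' hxz.2 (h2' hzy))
    exact ⟨w, hw1, hw2, hφwy⟩
  · -- q ≤ s
    refine ⟨fun x y hxy => hxy.2, fun x y hxy => ⟨x, p.1.2.refl' x, hxy⟩,
      comm_of_incl fun x y z hxz hzy => ?_⟩
    -- hxz : meet x z, hzy : q.1.2 z y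
    obtain ⟨w, hw1, hw2⟩ := fp_total' q.2 x y
    have hθwy : p.1.1 w y :=
      p.1.1.trans' (p.1.1.symm' (h1' hw1)) (p.1.1.trans' hxz.1 (h1' hzy))
    exact ⟨w, hw1, hθwy, hw2⟩
  · -- least upper bound
    intro r hpr hqr
    refine ⟨fun x y hxy => ⟨hpr.1 hxy, hqr.1 hxy⟩, fun x y hxy => ?_,
      comm_of_incl fun x y z hxz hzy => ?_⟩
    · obtain ⟨c, hc1, hc2⟩ := hxy
      exact r.1.2.trans' (hpr.2.1 hc1) (hqr.2.1 hc2)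
    · -- hxz : r.1.1 x z, hzy : join z y
      obtain ⟨b, hb1, hb2⟩ := hzy
      obtain ⟨c, hc1, hc2⟩ := comm_use hpr.2.2 hxz hb1
      obtain ⟨w, hw1, hw2⟩ := comm_use hqr.2.2 hc2 hb2
      exact ⟨w, ⟨c, hc1, hw1⟩, hw2⟩
  · -- orthomodular auxiliary
    intro r hpr hsr
    -- hsr : FactLE (FactPerp s0) r, i.e. r.1.1 ≤ join, meet ≤ r.1.2, Comp r.1.1 meet = ...
    have hsr1 : r.1.1 ≤ joinSetoid p.1.2 q.1.2 h3' := hsr.1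
    have hsr2 : meetSetoid p.1.1 q.1.1 ≤ r.1.2 := hsr.2.1
    have hsr3 : Relation.Comp (⇑r.1.1) (⇑(meetSetoid p.1.1 q.1.1))
        = Relation.Comp (⇑(meetSetoid p.1.1 q.1.1)) (⇑r.1.1) := hsr.2.2
    refine ⟨fun x y hxy => ?_, fun x y hxy => ?_, comm_of_incl fun x y z hxz hzy => ?_⟩
    · -- r.1.1 ≤ q.1.2
      obtain ⟨c, hc1, hc2⟩ := hsr1 hxy
      have hθxy : p.1.1 x y := hpr.1 hxy
      have hθxc : p.1.1 x c := p.1.1.trans' hθxy (p.1.1.symm' (h1' hc2))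
      have hxc : x = c := fp_eq p.2 hθxc hc1
      exact hxc ▸ hc2
    · -- q.1.1 ≤ r.1.2
      obtain ⟨m, hm1, hm2⟩ := fp_total' p.2 x y
      have hφmy : q.1.1 m y := q.1.1.trans' (q.1.1.symm' (h2' hm1)) hxy
      exact r.1.2.trans' (hpr.2.1 hm1) (hsr2 ⟨hm2, hφmy⟩)
    · -- Comp r.1.1 q.1.1 = Comp q.1.1 r.1.1
      -- hxz : r.1.1 x z, hzy : q.1.1 z y
      obtain ⟨m, hm1, hm2⟩ := fp_total' p.2 z y
      have hφmy : q.1.1 m y := q.1.1.trans' (q.1.1.symm' (h2' hm1)) hzy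
      obtain ⟨c, hc1, hc2⟩ := comm_use hpr.2.2 hxz hm1
      -- hc1 : p.1.2 x c, hc2 : r.1.1 c m
      obtain ⟨w, hw1, hw2⟩ := comm_use hsr3 hc2 (⟨hm2, hφmy⟩ : meetSetoid p.1.1 q.1.1 m y)
      -- hw1 : meet c w, hw2 : r.1.1 w y
      exact ⟨w, q.1.1.trans' (h2' hc1) hw1.2, hw2⟩

end FactHelpers
/-- For a non-empty set `X`, `(Fact X, ≤, ⊥, 0, 1)` is an orthomodular poset. -/
theorem factPair_orthomodularPoset (X : Type*) [Nonempty X] :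
    -- `≤` is a partial order
    (∀ p : FactPair X, FactLE p p) ∧
    (∀ p q : FactPair X, FactLE p q → FactLE q p → p = q) ∧
    (∀ p q r : FactPair X, FactLE p q → FactLE q r → FactLE p r) ∧
    -- least element `0` and greatest element `1`
    (∀ p : FactPair X, FactLE (FactZero X) p) ∧
    (∀ p : FactPair X, FactLE p (FactOne X)) ∧
    -- `⊥` is order-reversing and an involution
    (∀ p q : FactPair X, FactLE p q → FactLE (FactPerp q) (FactPerp p)) ∧
    (∀ p : FactPair X, FactPerp (FactPerp p) = p) ∧
    -- the only lower bound of `p, p^⊥` is `0`, the only upper bound is `1`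
    (∀ p x : FactPair X, FactLE x p → FactLE x (FactPerp p) → x = FactZero X) ∧
    (∀ p x : FactPair X, FactLE p x → FactLE (FactPerp p) x → x = FactOne X) ∧
    -- orthogonal pairs have a least upper bound
    (∀ p q : FactPair X, FactLE p (FactPerp q) →
      ∃ s : FactPair X, FactLE p s ∧ FactLE q s ∧
        ∀ r : FactPair X, FactLE p r → FactLE q r → FactLE s r) ∧
    -- the orthomodular law: `p ⊕ (p ⊕ q)^⊥ = q^⊥` whenever `p ≤ q^⊥`
    (∀ p q s t : FactPair X, FactLE p (FactPerp q) →
      (FactLE p s ∧ FactLE q s ∧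
        ∀ r : FactPair X, FactLE p r → FactLE q r → FactLE s r) →
      (FactLE p t ∧ FactLE (FactPerp s) t ∧
        ∀ r : FactPair X, FactLE p r → FactLE (FactPerp s) r → FactLE t r) →
      t = FactPerp q) := by

  refine ⟨factLE_refl, fun p q => factLE_antisymm, fun p q r => factLE_trans,
    ?_, ?_, fun p q => perp_antitone, ?_, ?_, ?_, ?_, ?_⟩
  · -- 0 ≤ p
    intro p
    refine ⟨le_top, bot_le, comm_of_incl fun x y z hxz hzy => ?_⟩
    have hzy' : z = y := by change (⊥ : Setoid X) z y at hzy; simpa [Setoid.bot_def] using hzy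
    exact ⟨x, (⊥ : Setoid X).refl' x, hzy' ▸ hxz⟩
  · -- p ≤ 1
    intro p
    refine ⟨bot_le, le_top, comm_of_incl fun x y z hxz hzy => ?_⟩
    have hxz' : x = z := by change (⊥ : Setoid X) x z at hxz; simpa [Setoid.bot_def] using hxz
    exact ⟨y, hxz' ▸ hzy, (⊥ : Setoid X).refl' y⟩
  · -- perp involutive
    intro p
    exact Subtype.ext (Prod.ext rfl rfl)
  · -- lower bounds of p, p^⊥
    intro p x h1 h2
    have hbot : ∀ a b : X, x.1.2 a b → a = b := fun a b hab =>
      fp_eq p.2 (h2.2.1 hab) (h1.2.1 hab)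
    have htop : ∀ a b : X, x.1.1 a b := by
      intro a b
      obtain ⟨z, hz1, hz2⟩ := x.2.2 a b
      exact (hbot _ _ hz2) ▸ hz1
    refine Subtype.ext (Prod.ext ?_ ?_)
    · exact le_antisymm le_top (fun a b _ => htop a b)
    · refine le_antisymm (fun a b hab => ?_) bot_le
      have : a = b := hbot a b hab
      subst this
      exact (⊥ : Setoid X).refl' a
  · -- upper bounds of p, p^⊥
    intro p x h1 h2
    have hbot : ∀ a b : X, x.1.1 a b → a = b := fun a b hab =>
      fp_eq p.2 (h1.1 hab) (h2.1 hab)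
    have htop : ∀ a b : X, x.1.2 a b := by
      intro a b
      obtain ⟨z, hz1, hz2⟩ := p.2.2 a b
      exact x.1.2.trans' (h2.2.1 hz1) (h1.2.1 hz2)
    refine Subtype.ext (Prod.ext ?_ ?_)
    · refine le_antisymm (fun a b hab => ?_) bot_le
      have : a = b := hbot a b hab
      subst this
      exact (⊥ : Setoid X).refl' a
    · exact le_antisymm le_top (fun a b _ => htop a b)
  · -- joins of orthogonal pairs
    intro p q h
    obtain ⟨s, hps, hqs, hleast, _⟩ := join_main p q h
    exact ⟨s, hps, hqs, hleast⟩
  · -- orthomodularity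
    intro p q s t h hs ht
    obtain ⟨s0, hps0, hqs0, hleast, hC⟩ := join_main p q h
    have hss0 : s = s0 := factLE_antisymm (hs.2.2 s0 hps0 hqs0) (hleast s hs.1 hs.2.1)
    subst hss0
    exact factLE_antisymm
      (ht.2.2 (FactPerp q) h (perp_antitone hqs0))
      (hC t ht.1 ht.2.1)
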